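/- Let Σ_x be a real symmetric positive semidefinite d×d matrix and let 𝒢 = {G ∈ O(d) : Gᵀ Σ_x G = Σ_x} be the group of orthogonal matrices leaving Σ_x invariant. If μ is a probability distribution on ℝ^d with finite second moment whose pushforward under every G ∈ 𝒢 equals μ itself, then the mean μ_w = E_{w∼μ}[w] is 0 and the covariance matrix Σ_w = E_{w∼μ}[(w − μ_w)(w − μ_w)ᵀ] is aligned with Σ_x. -/

import Mathlib

open Matrix MeasureTheory

/-- Eigenspace of a `d × d` real matrix `A` for the (potential) eigenvalue `μ`. -/
noncomputable def eigSp {d : ℕ} (A : Matrix (Fin d) (Fin d) ℝ) (μ : ℝ) :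
    Submodule ℝ (Fin d → ℝ) :=
  Module.End.eigenspace A.mulVecLin μ

/-- `A` is aligned with `B` if every eigenspace of `B` is contained in an eigenspace of `A`. -/
def IsAligned {d : ℕ} (A B : Matrix (Fin d) (Fin d) ℝ) : Prop :=
  ∀ μ : ℝ, ∃ ν : ℝ, eigSp B μ ≤ eigSp A ν

section Householder

variable {d : ℕ}

/-- Householder reflection through the hyperplane orthogonal to `w`. -/
noncomputable def hh (w : Fin d → ℝ) : Matrix (Fin d) (Fin d) ℝ :=
  1 - (2 / (w ⬝ᵥ w)) • vecMulVec w w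

lemma dot_self_pos {w : Fin d → ℝ} (hw : w ≠ 0) : 0 < w ⬝ᵥ w := by
  have h0 : 0 ≤ w ⬝ᵥ w := Finset.sum_nonneg fun i _ => mul_self_nonneg (w i)
  rcases lt_or_eq_of_le h0 with h | h
  · exact h
  · exact absurd (dotProduct_self_eq_zero.mp h.symm) hw

lemma vecMulVec_transpose' (w : Fin d → ℝ) : (vecMulVec w w)ᵀ = vecMulVec w w := by
  ext i j; simp [vecMulVec_apply, mul_comm]

lemma vecMulVec_mul_self (w : Fin d → ℝ) :
    vecMulVec w w * vecMulVec w w = (w ⬝ᵥ w) • vecMulVec w w := by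
  ext i j
  simp only [Matrix.mul_apply, vecMulVec_apply, Matrix.smul_apply, smul_eq_mul, dotProduct]
  rw [Finset.sum_mul]
  exact Finset.sum_congr rfl fun k _ => by ring

lemma hh_transpose (w : Fin d → ℝ) : (hh w)ᵀ = hh w := by
  unfold hh
  rw [transpose_sub, transpose_one, transpose_smul, vecMulVec_transpose']

lemma hh_mul_self {w : Fin d → ℝ} (hw : w ≠ 0) : hh w * hh w = 1 := by
  have hq : w ⬝ᵥ w ≠ 0 := ne_of_gt (dot_self_pos hw)
  unfold hh
  set c := 2 / (w ⬝ᵥ w) with hc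
  set M := vecMulVec w w with hM
  have h1 : (c • M) * (c • M) = (c + c) • M := by
    rw [Matrix.smul_mul, Matrix.mul_smul, vecMulVec_mul_self, smul_smul, smul_smul]
    congr 1
    rw [hc]; field_simp; ring
  rw [sub_mul, mul_sub, mul_sub, h1, add_smul]
  simp only [one_mul, mul_one]
  abel

lemma vecMulVec_mulVec' (w x : Fin d → ℝ) :
    (vecMulVec w w) *ᵥ x = (w ⬝ᵥ x) • w := by
  ext i
  simp only [Matrix.mulVec, dotProduct, vecMulVec_apply, Pi.smul_apply, smul_eq_mul]
  rw [Finset.sum_mul]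
  exact Finset.sum_congr rfl fun k _ => by ring

lemma hh_mulVec (w x : Fin d → ℝ) :
    (hh w) *ᵥ x = x - ((2 / (w ⬝ᵥ w)) * (w ⬝ᵥ x)) • w := by
  unfold hh
  rw [sub_mulVec, one_mulVec, smul_mulVec, vecMulVec_mulVec', smul_smul]

lemma hh_mulVec_self {w : Fin d → ℝ} (hw : w ≠ 0) : (hh w) *ᵥ w = -w := by
  have hq : w ⬝ᵥ w ≠ 0 := ne_of_gt (dot_self_pos hw)
  rw [hh_mulVec, div_mul_cancel₀ 2 hq]
  module

lemma hh_commutes {Sx : Matrix (Fin d) (Fin d) ℝ} (hsym : Sxᵀ = Sx)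
    {w : Fin d → ℝ} {lam : ℝ} (heig : Sx *ᵥ w = lam • w) :
    Sx * hh w = hh w * Sx := by
  have h1 : ∀ i, ∑ k, Sx i k * w k = lam * w i := by
    intro i
    have := congr_fun heig i
    simpa [Matrix.mulVec, dotProduct] using this
  have h2 : ∀ j, ∑ k, Sx k j * w k = lam * w j := by
    intro j
    have h := h1 j
    calc ∑ k, Sx k j * w k = ∑ k, Sxᵀ j k * w k := by
          exact Finset.sum_congr rfl fun k _ => by rw [Matrix.transpose_apply]
    _ = ∑ k, Sx j k * w k := by rw [hsym]
    _ = lam * w j := h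
  have hMS : Sx * vecMulVec w w = vecMulVec w w * Sx := by
    ext i j
    simp only [Matrix.mul_apply, vecMulVec_apply]
    calc (∑ k, Sx i k * (w k * w j)) = (∑ k, Sx i k * w k) * w j := by
          rw [Finset.sum_mul]; exact Finset.sum_congr rfl fun k _ => by ring
    _ = (lam * w i) * w j := by rw [h1 i]
    _ = w i * (lam * w j) := by ring
    _ = w i * (∑ k, Sx k j * w k) := by rw [h2 j]
    _ = ∑ k, w i * w k * Sx k j := by
          rw [Finset.mul_sum]; exact Finset.sum_congr rfl fun k _ => by ring
  unfold hh
  rw [mul_sub, sub_mul, mul_one, one_mul, Matrix.mul_smul, Matrix.smul_mul, hMS]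

lemma hh_orth {w : Fin d → ℝ} (hw : w ≠ 0) : (hh w)ᵀ * hh w = 1 := by
  rw [hh_transpose, hh_mul_self hw]

lemma hh_inv_Sx {Sx : Matrix (Fin d) (Fin d) ℝ} (hsym : Sxᵀ = Sx)
    {w : Fin d → ℝ} {lam : ℝ} (hw : w ≠ 0) (heig : Sx *ᵥ w = lam • w) :
    (hh w)ᵀ * Sx * hh w = Sx := by
  rw [hh_transpose, mul_assoc, hh_commutes hsym heig, ← mul_assoc, hh_mul_self hw, one_mul]

lemma hh_swap {u v : Fin d → ℝ} (hu : u ⬝ᵥ u = 1) (hv : v ⬝ᵥ v = 1) (huv : u ≠ v) :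
    (hh (u - v)) *ᵥ u = v := by
  have hw : u - v ≠ 0 := sub_ne_zero.mpr huv
  have hq : (u - v) ⬝ᵥ (u - v) = 2 * (1 - u ⬝ᵥ v) := by
    rw [sub_dotProduct, dotProduct_sub, dotProduct_sub, hu, hv,
      dotProduct_comm v u]
    ring
  have hqne : (u - v) ⬝ᵥ (u - v) ≠ 0 := ne_of_gt (dot_self_pos hw)
  have hdu : (u - v) ⬝ᵥ u = 1 - u ⬝ᵥ v := by
    rw [sub_dotProduct, hu, dotProduct_comm v u]
  have h1 : (2 / ((u - v) ⬝ᵥ (u - v))) * ((u - v) ⬝ᵥ u) = 1 := by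
    rw [hq, hdu]
    have hne : (1 : ℝ) - u ⬝ᵥ v ≠ 0 := by
      intro h; apply hqne; rw [hq, h]; ring
    field_simp
  rw [hh_mulVec, h1, one_smul]
  abel

end Householder

/-- If a probability distribution `μ` on `ℝ^d` with finite second moment is
invariant under every orthogonal matrix `G` leaving the symmetric positive semidefinite matrix
`Sx` invariant, then its mean is `0` and its covariance matrix is aligned with `Sx`. -/
theorem mean_zero_and_cov_aligned_of_invariant {d : ℕ}
    (Sx : Matrix (Fin d) (Fin d) ℝ) (hSx : Sx.PosSemidef)
    (μ : Measure (Fin d → ℝ)) [IsProbabilityMeasure μ]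
    (hmom1 : ∀ i, Integrable (fun w => w i) μ)
    (hmom2 : ∀ i j, Integrable (fun w => w i * w j) μ)
    (hinv : ∀ G : Matrix (Fin d) (Fin d) ℝ, Gᵀ * G = 1 → Gᵀ * Sx * G = Sx →
      Measure.map G.mulVec μ = μ)
    (μw : Fin d → ℝ) (hμw : μw = fun i => ∫ w, w i ∂μ)
    (Sw : Matrix (Fin d) (Fin d) ℝ)
    (hSw : Sw = Matrix.of fun i j => ∫ w, (w i - μw i) * (w j - μw j) ∂μ) :
    μw = 0 ∧ IsAligned Sw Sx := by
  have hmeas : ∀ G : Matrix (Fin d) (Fin d) ℝ, Measurable G.mulVec := by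
    intro G
    apply measurable_pi_lambda
    intro i
    simp only [Matrix.mulVec, dotProduct]
    exact Finset.measurable_sum _ fun j _ => (measurable_pi_apply j).const_mul _
  have hcomp : ∀ G : Matrix (Fin d) (Fin d) ℝ, Measure.map G.mulVec μ = μ →
      ∀ f : (Fin d → ℝ) → ℝ, Measurable f →
      ∫ w, f w ∂μ = ∫ w, f (G *ᵥ w) ∂μ := by
    intro G hmap f hf
    conv_lhs => rw [← hmap]
    exact integral_map (hmeas G).aemeasurable hf.aestronglyMeasurable
  have hsym : Sxᵀ = Sx := by
    have h := hSx.isHermitian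
    simpa [Matrix.IsHermitian, Matrix.conjTranspose_eq_transpose_of_trivial] using h
  -- Step 1: mean is zero
  have hmean : ∀ i, (∫ w, w i ∂μ) = 0 := by
    have hmap : Measure.map (-1 : Matrix (Fin d) (Fin d) ℝ).mulVec μ = μ := by
      apply hinv <;> simp
    intro i
    have h := hcomp _ hmap (fun w => w i) (measurable_pi_apply i)
    have hneg : ∀ w : Fin d → ℝ, ((-1 : Matrix (Fin d) (Fin d) ℝ) *ᵥ w) i = -(w i) := by
      intro w
      rw [Matrix.neg_mulVec, Matrix.one_mulVec]
      simp
    simp only [hneg] at h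
    rw [integral_neg] at h
    linarith
  have hμw0 : μw = 0 := by
    funext i
    rw [hμw]
    simpa using hmean i
  have hSw' : ∀ i j, Sw i j = ∫ w, w i * w j ∂μ := by
    intro i j
    rw [hSw, hμw0]
    simp
  refine ⟨hμw0, ?_⟩
  -- Step 2: Sw commutes with every G in the symmetry group
  have hcomm : ∀ G : Matrix (Fin d) (Fin d) ℝ, Gᵀ = G → Gᵀ * G = 1 →
      Gᵀ * Sx * G = Sx → Sw * G = G * Sw := by
    intro G hGsym hGO hGS
    have hmap := hinv G hGO hGS
    have hGG : G * G = 1 := by nth_rewrite 1 [← hGsym]; exact hGO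
    have key : G * Sw * Gᵀ = Sw := by
      ext i j
      have hfmeas : Measurable (fun w : Fin d → ℝ => w i * w j) :=
        (measurable_pi_apply i).mul (measurable_pi_apply j)
      have h1 : ∫ w, w i * w j ∂μ = ∫ w, (G *ᵥ w) i * (G *ᵥ w) j ∂μ :=
        hcomp G hmap _ hfmeas
      have h2 : ∀ w : Fin d → ℝ, (G *ᵥ w) i * (G *ᵥ w) j
          = ∑ k, ∑ l, G i k * G j l * (w k * w l) := by
        intro w
        simp only [Matrix.mulVec, dotProduct]
        rw [Finset.sum_mul_sum]
        exact Finset.sum_congr rfl fun k _ => Finset.sum_congr rfl fun l _ => by ring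
      have h3 : ∫ w, (G *ᵥ w) i * (G *ᵥ w) j ∂μ
          = ∑ k, ∑ l, G i k * G j l * ∫ w, w k * w l ∂μ := by
        simp_rw [h2]
        rw [integral_finset_sum _ fun k _ =>
          integrable_finset_sum _ fun l _ => ((hmom2 k l).const_mul _)]
        refine Finset.sum_congr rfl fun k _ => ?_
        rw [integral_finset_sum _ fun l _ => ((hmom2 k l).const_mul _)]
        exact Finset.sum_congr rfl fun l _ => integral_const_mul _ _
      have h4 : (G * Sw * Gᵀ) i j = ∑ k, ∑ l, G i k * G j l * Sw k l := by
        simp only [Matrix.mul_apply, Matrix.transpose_apply]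
        calc ∑ l, (∑ k, G i k * Sw k l) * G j l
            = ∑ l, ∑ k, G i k * G j l * Sw k l := by
              refine Finset.sum_congr rfl fun l _ => ?_
              rw [Finset.sum_mul]
              exact Finset.sum_congr rfl fun k _ => by ring
          _ = ∑ k, ∑ l, G i k * G j l * Sw k l := Finset.sum_comm
      rw [h4]
      simp_rw [hSw']
      rw [← h3, ← h1]
    rw [hGsym] at key
    calc Sw * G = G * Sw * G * G := by rw [key]
      _ = G * Sw * (G * G) := by rw [mul_assoc]
      _ = G * Sw := by rw [hGG, mul_one]
  -- Step 3: alignment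
  intro lam
  by_cases hV : eigSp Sx lam = ⊥
  · exact ⟨0, by rw [hV]; exact bot_le⟩
  · have hmem : ∀ y : Fin d → ℝ, y ∈ eigSp Sx lam ↔ Sx *ᵥ y = lam • y := fun y => by
      rw [eigSp, Module.End.mem_eigenspace_iff, Matrix.mulVecLin_apply]
    -- every unit eigenvector of Sx is an eigenvector of Sw
    have hscal : ∀ v : Fin d → ℝ, Sx *ᵥ v = lam • v → v ⬝ᵥ v = 1 →
        Sw *ᵥ v = (v ⬝ᵥ (Sw *ᵥ v)) • v := by
      intro v hv hv1
      have hvne : v ≠ 0 := by intro h; rw [h] at hv1; simp at hv1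
      have hc := hcomm (hh v) (hh_transpose v) (hh_orth hvne) (hh_inv_Sx hsym hvne hv)
      have h1 : Sw *ᵥ ((hh v) *ᵥ v) = (hh v) *ᵥ (Sw *ᵥ v) := by
        rw [Matrix.mulVec_mulVec, Matrix.mulVec_mulVec, hc]
      rw [hh_mulVec_self hvne, Matrix.mulVec_neg, hh_mulVec, hv1, div_one] at h1
      -- h1 : -(Sw *ᵥ v) = Sw *ᵥ v - (2 * (v ⬝ᵥ (Sw *ᵥ v))) • v
      have h3 : (2:ℝ) • (Sw *ᵥ v) = (2:ℝ) • ((v ⬝ᵥ (Sw *ᵥ v)) • v) := by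
        have h7 : -(Sw *ᵥ v) + (2 * (v ⬝ᵥ (Sw *ᵥ v))) • v = Sw *ᵥ v := by
          rw [h1]; abel
        rw [two_smul, smul_smul]
        nth_rewrite 2 [← h7]
        module
      exact smul_right_injective _ two_ne_zero h3
    -- unit eigenvectors all share the same Sw-eigenvalue
    have heq : ∀ u v : Fin d → ℝ, Sx *ᵥ u = lam • u → Sx *ᵥ v = lam • v →
        u ⬝ᵥ u = 1 → v ⬝ᵥ v = 1 → u ⬝ᵥ (Sw *ᵥ u) = v ⬝ᵥ (Sw *ᵥ v) := by
      intro u v hu hv hu1 hv1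
      by_cases huv : u = v
      · rw [huv]
      · have hw : u - v ≠ 0 := sub_ne_zero.mpr huv
        have hweig : Sx *ᵥ (u - v) = lam • (u - v) := by
          rw [Matrix.mulVec_sub, hu, hv, smul_sub]
        have hc := hcomm (hh (u - v)) (hh_transpose _) (hh_orth hw)
          (hh_inv_Sx hsym hw hweig)
        have hswap := hh_swap hu1 hv1 huv
        have h1 : Sw *ᵥ v = (hh (u - v)) *ᵥ (Sw *ᵥ u) := by
          conv_lhs => rw [← hswap]
          rw [Matrix.mulVec_mulVec, Matrix.mulVec_mulVec, hc]
        rw [hscal u hu hu1, Matrix.mulVec_smul, hswap] at h1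
        have h2 := hscal v hv hv1
        have hvne : v ≠ 0 := by intro h; rw [h] at hv1; simp at hv1
        have h5 : ((u ⬝ᵥ (Sw *ᵥ u)) - (v ⬝ᵥ (Sw *ᵥ v))) • v = 0 := by
          rw [sub_smul, ← h1, ← h2, sub_self]
        rcases smul_eq_zero.mp h5 with h | h
        · exact sub_eq_zero.mp h
        · exact absurd h hvne
    obtain ⟨x, hxV, hx0⟩ := (Submodule.ne_bot_iff _).mp hV
    have hnorm : ∀ y : Fin d → ℝ, y ≠ 0 →
        ((Real.sqrt (y ⬝ᵥ y))⁻¹ • y) ⬝ᵥ ((Real.sqrt (y ⬝ᵥ y))⁻¹ • y) = 1 := by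
      intro y hy
      have h0 : 0 < y ⬝ᵥ y := dot_self_pos hy
      rw [smul_dotProduct, dotProduct_smul, smul_eq_mul, smul_eq_mul,
        ← mul_assoc, ← mul_inv, Real.mul_self_sqrt h0.le]
      exact inv_mul_cancel₀ (ne_of_gt h0)
    have hunit_eig : ∀ y : Fin d → ℝ, Sx *ᵥ y = lam • y →
        Sx *ᵥ ((Real.sqrt (y ⬝ᵥ y))⁻¹ • y) = lam • ((Real.sqrt (y ⬝ᵥ y))⁻¹ • y) := by
      intro y hy
      rw [Matrix.mulVec_smul, hy, smul_comm]
    set v0 : Fin d → ℝ := (Real.sqrt (x ⬝ᵥ x))⁻¹ • x with hv0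
    have hv0eig : Sx *ᵥ v0 = lam • v0 := hunit_eig x ((hmem x).mp hxV)
    have hv01 : v0 ⬝ᵥ v0 = 1 := hnorm x hx0
    refine ⟨v0 ⬝ᵥ (Sw *ᵥ v0), ?_⟩
    intro y hy
    rw [hmem] at hy
    rw [eigSp, Module.End.mem_eigenspace_iff, Matrix.mulVecLin_apply]
    by_cases hy0 : y = 0
    · rw [hy0, Matrix.mulVec_zero, smul_zero]
    · set u : Fin d → ℝ := (Real.sqrt (y ⬝ᵥ y))⁻¹ • y with hu
      have hueig : Sx *ᵥ u = lam • u := hunit_eig y hy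
      have hu1 : u ⬝ᵥ u = 1 := hnorm y hy0
      have hSwu : Sw *ᵥ u = (v0 ⬝ᵥ (Sw *ᵥ v0)) • u := by
        rw [hscal u hueig hu1, heq u v0 hueig hv0eig hu1 hv01]
      have hsq : Real.sqrt (y ⬝ᵥ y) ≠ 0 :=
        ne_of_gt (Real.sqrt_pos.mpr (dot_self_pos hy0))
      have hyu : Real.sqrt (y ⬝ᵥ y) • u = y := by
        rw [hu, smul_smul, mul_inv_cancel₀ hsq, one_smul]
      calc Sw *ᵥ y = Sw *ᵥ (Real.sqrt (y ⬝ᵥ y) • u) := by rw [hyu]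
        _ = Real.sqrt (y ⬝ᵥ y) • (Sw *ᵥ u) := by rw [Matrix.mulVec_smul]
        _ = Real.sqrt (y ⬝ᵥ y) • ((v0 ⬝ᵥ (Sw *ᵥ v0)) • u) := by rw [hSwu]
        _ = (v0 ⬝ᵥ (Sw *ᵥ v0)) • (Real.sqrt (y ⬝ᵥ y) • u) := smul_comm _ _ _
        _ = (v0 ⬝ᵥ (Sw *ᵥ v0)) • y := by rw [hyu]
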